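/- (Khintchine–Dyson transference, special case m = 1) Let α_1,…,α_{n−1} be real numbers and suppose there exists η > 0 such that infinitely many integers q > 0 satisfy max_i ‖q·α_i‖ ≤ q^{−(1+η)/(n−1)} (where ‖·‖ denotes distance to the nearest integer). Then there exists η* ≥ η/((n−2)η + n − 1) such that infinitely many nonzero integer vectors u = (u_1,…,u_{n−1}) satisfy ‖u_1α_1 + ⋯ + u_{n−1}α_{n−1}‖ ≤ (max_i|u_i|)^{−(n−1)(1+η*')} for every η*' < η*. -/

import Mathlib

open Finset in
lemma kt_core (k : ℕ) (hk : 1 ≤ k) (α : Fin k → ℝ) (c : ℝ) (q : ℕ) (hq : 0 < q)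
    (hap : ∀ i, |(q : ℝ) * α i - round ((q : ℝ) * α i)| ≤ (q : ℝ) ^ (-c)) :
    ∃ w : Fin k → ℤ, w ≠ 0 ∧
      (∀ i, |(w i : ℝ)| ≤ (⌈(q : ℝ) ^ ((k : ℝ)⁻¹)⌉₊ : ℝ)) ∧
      |(∑ i, (w i : ℝ) * α i) - round (∑ i, (w i : ℝ) * α i)| ≤
        (k : ℝ) * (⌈(q : ℝ) ^ ((k : ℝ)⁻¹)⌉₊ : ℝ) * (q : ℝ) ^ (-c) / q := by
  classical
  set U : ℕ := ⌈(q : ℝ) ^ ((k : ℝ)⁻¹)⌉₊ with hU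
  set p : Fin k → ℤ := fun i => round ((q : ℝ) * α i) with hp
  haveI : NeZero q := ⟨hq.ne'⟩
  have hqR : (0 : ℝ) < (q : ℝ) := by positivity
  have hqU : q ≤ U ^ k := by
    have h1 : (q : ℝ) ^ ((k : ℝ)⁻¹) ≤ (U : ℝ) := Nat.le_ceil _
    have h2 : (q : ℝ) ≤ (U : ℝ) ^ k := by
      calc (q : ℝ) = ((q : ℝ) ^ ((k : ℝ)⁻¹)) ^ k := by
            rw [Real.rpow_inv_natCast_pow (by positivity) (by omega)]
        _ ≤ (U : ℝ) ^ k := pow_le_pow_left₀ (Real.rpow_nonneg (by positivity) _) h1 k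
    exact_mod_cast h2
  have hcard : Fintype.card (ZMod q) < Fintype.card (Fin k → Fin (U + 1)) := by
    simp only [ZMod.card, Fintype.card_fun, Fintype.card_fin]
    calc q ≤ U ^ k := hqU
      _ < (U + 1) ^ k := Nat.pow_lt_pow_left (Nat.lt_succ_self U) (by omega)
  obtain ⟨a, b, hab, hfab⟩ := Fintype.exists_ne_map_eq_of_card_lt
    (fun u : Fin k → Fin (U + 1) => ∑ i, ((u i : ℕ) : ZMod q) * ((p i : ℤ) : ZMod q)) hcard
  set w : Fin k → ℤ := fun i => ((a i : ℕ) : ℤ) - ((b i : ℕ) : ℤ) with hw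
  have hw0 : w ≠ 0 := by
    intro h
    apply hab
    funext i
    have := congrFun h i
    simp only [hw, Pi.zero_apply, sub_eq_zero] at this
    exact Fin.ext (by exact_mod_cast this)
  have hwle : ∀ i, |(w i : ℝ)| ≤ (U : ℝ) := by
    intro i
    have ha' : ((a i : ℕ) : ℝ) ≤ (U : ℝ) := by
      exact_mod_cast Nat.lt_succ_iff.mp (a i).is_lt
    have hb' : ((b i : ℕ) : ℝ) ≤ (U : ℝ) := by
      exact_mod_cast Nat.lt_succ_iff.mp (b i).is_lt
    have ha0 : (0 : ℝ) ≤ ((a i : ℕ) : ℝ) := Nat.cast_nonneg _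
    have hb0 : (0 : ℝ) ≤ ((b i : ℕ) : ℝ) := Nat.cast_nonneg _
    rw [abs_le]
    constructor <;> simp only [hw] <;> push_cast <;> linarith
  have hdvd : (q : ℤ) ∣ ∑ i, w i * p i := by
    have : ((∑ i, w i * p i : ℤ) : ZMod q) = 0 := by
      push_cast [hw]
      simp_rw [sub_mul]
      rw [Finset.sum_sub_distrib, sub_eq_zero]
      exact hfab
    exact (ZMod.intCast_zmod_eq_zero_iff_dvd _ _).mp this
  obtain ⟨t, ht⟩ := hdvd
  refine ⟨w, hw0, hwle, ?_⟩
  set x : ℝ := ∑ i, (w i : ℝ) * α i with hx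
  have htR : ∑ i, (w i : ℝ) * (p i : ℝ) = (q : ℝ) * t := by
    exact_mod_cast congrArg (fun z : ℤ => (z : ℝ)) ht
  have e1 : (q : ℝ) * x = ∑ i, (w i : ℝ) * ((q : ℝ) * α i) := by
    rw [hx, Finset.mul_sum]
    exact Finset.sum_congr rfl fun i _ => by ring
  have key : (q : ℝ) * (x - t) = ∑ i, (w i : ℝ) * ((q : ℝ) * α i - (p i : ℝ)) := by
    simp_rw [mul_sub]
    rw [Finset.sum_sub_distrib, ← e1, htR]
  have habs : |x - (t : ℝ)| * q ≤ (k : ℝ) * (U : ℝ) * (q : ℝ) ^ (-c) := by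
    calc |x - (t : ℝ)| * q = |(q : ℝ) * (x - t)| := by
          rw [abs_mul, abs_of_pos hqR]; ring
      _ = |∑ i, (w i : ℝ) * ((q : ℝ) * α i - (p i : ℝ))| := by rw [key]
      _ ≤ ∑ i : Fin k, (U : ℝ) * (q : ℝ) ^ (-c) := by
          refine (Finset.abs_sum_le_sum_abs _ _).trans (Finset.sum_le_sum fun i _ => ?_)
          rw [abs_mul]
          exact mul_le_mul (hwle i) (hap i) (abs_nonneg _) (Nat.cast_nonneg _)
      _ = (k : ℝ) * (U : ℝ) * (q : ℝ) ^ (-c) := by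
          rw [Finset.sum_const, Finset.card_univ, Fintype.card_fin, nsmul_eq_mul]; ring
  calc |x - round x| ≤ |x - (t : ℝ)| := round_le x t
    _ ≤ _ := (le_div_iff₀ hqR).mpr habs


open Filter

set_option maxHeartbeats 1000000 in
/-- Khintchine's transference principle (case `m = 1` of Dyson's inequalities,
with `n = k + 1`, so `n - 1 = k` and `n - 2 = k - 1`): if for some `η > 0`
infinitely many positive integers `q` satisfy
`max_i ‖q αᵢ‖ ≤ q^{-(1+η)/k}`, then there is
`η* ≥ η / ((k-1)η + k)` such that for every `η' < η*` there are infinitely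
many nonzero integer vectors `u` with
`‖u₁α₁ + ⋯ + u_k α_k‖ ≤ (max_i |uᵢ|)^{-k(1+η')}`.
Here `‖x‖ = |x - round x|` is the distance to the nearest integer. -/
theorem khintchine_transference
    (k : ℕ) (hk : 1 ≤ k) (α : Fin k → ℝ) (η : ℝ) (hη : 0 < η)
    (hinf : {q : ℕ | 0 < q ∧ ∀ i,
      |(q : ℝ) * α i - round ((q : ℝ) * α i)| ≤ (q : ℝ) ^ (-(1 + η) / k)}.Infinite) :
    ∃ ηs : ℝ, η / (((k : ℝ) - 1) * η + k) ≤ ηs ∧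
      ∀ η' < ηs,
        {u : Fin k → ℤ | u ≠ 0 ∧
          |(∑ i, (u i : ℝ) * α i) - round (∑ i, (u i : ℝ) * α i)| ≤
            ((Finset.univ.sup fun i => (u i).natAbs : ℕ) : ℝ) ^
              (-(k : ℝ) * (1 + η'))}.Infinite := by
  classical
  have hkR : (1 : ℝ) ≤ (k : ℝ) := by exact_mod_cast hk
  have hkR0 : (0 : ℝ) < (k : ℝ) := by linarith
  -- the "sup" is at least 1 for nonzero vectors
  have hM1 : ∀ u : Fin k → ℤ, u ≠ 0 →
      (1 : ℝ) ≤ ((Finset.univ.sup fun i => (u i).natAbs : ℕ) : ℝ) := by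
    intro u hu
    obtain ⟨i, hi⟩ := Function.ne_iff.mp hu
    have h1 : 1 ≤ (u i).natAbs := Int.natAbs_pos.mpr hi
    have h2 : (u i).natAbs ≤ Finset.univ.sup fun i => (u i).natAbs :=
      Finset.le_sup (f := fun i => (u i).natAbs) (Finset.mem_univ i)
    exact_mod_cast h1.trans h2
  refine ⟨η / k, ?_, ?_⟩
  · rw [div_le_div_iff₀ (by nlinarith) hkR0]
    nlinarith [mul_nonneg (mul_nonneg hη.le hη.le) (sub_nonneg.mpr hkR)]
  intro η' hη'
  -- reduce to the case 0 ≤ η'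
  suffices key : ∀ η'' : ℝ, 0 ≤ η'' → η'' < η / k →
      {u : Fin k → ℤ | u ≠ 0 ∧
        |(∑ i, (u i : ℝ) * α i) - round (∑ i, (u i : ℝ) * α i)| ≤
          ((Finset.univ.sup fun i => (u i).natAbs : ℕ) : ℝ) ^
            (-(k : ℝ) * (1 + η''))}.Infinite by
    refine (key (max η' 0) (le_max_right _ _)
      (max_lt hη' (div_pos hη hkR0))).mono ?_
    rintro u ⟨hu0, hub⟩
    refine ⟨hu0, hub.trans ?_⟩
    apply Real.rpow_le_rpow_of_exponent_le (hM1 u hu0)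
    nlinarith [le_max_left η' (0:ℝ)]
  intro η'' hη''0 hη''
  set S : Set (Fin k → ℤ) := {u : Fin k → ℤ | u ≠ 0 ∧
        |(∑ i, (u i : ℝ) * α i) - round (∑ i, (u i : ℝ) * α i)| ≤
          ((Finset.univ.sup fun i => (u i).natAbs : ℕ) : ℝ) ^
            (-(k : ℝ) * (1 + η''))} with hS
  by_cases hint : ∃ u : Fin k → ℤ, u ≠ 0 ∧ ∃ m : ℤ, (∑ i, (u i : ℝ) * α i) = (m : ℝ)
  · -- an exact integer relation: all positive multiples work
    obtain ⟨u, hu0, m, hm⟩ := hint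
    obtain ⟨i₀, hi₀⟩ := Function.ne_iff.mp hu0
    simp only [Pi.zero_apply] at hi₀
    refine Set.infinite_of_injective_forall_mem
      (f := fun n : ℕ => fun i => ((n : ℤ) + 1) * u i) ?_ ?_
    · intro n n' h
      have h1 : ((n : ℤ) + 1) * u i₀ = ((n' : ℤ) + 1) * u i₀ := congrFun h i₀
      have h2 : ((n : ℤ) + 1) = ((n' : ℤ) + 1) := mul_right_cancel₀ hi₀ h1
      exact_mod_cast (by omega : (n : ℤ) = n')
    · intro n
      have hne : (fun i => ((n : ℤ) + 1) * u i) ≠ 0 := by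
        intro h
        have h0 : ((n : ℤ) + 1) * u i₀ = 0 := congrFun h i₀
        rcases mul_eq_zero.mp h0 with h' | h'
        · omega
        · exact hi₀ h'
      refine ⟨hne, ?_⟩
      have hsum : (∑ i, ((((n : ℤ) + 1) * u i : ℤ) : ℝ) * α i)
          = ((((n : ℤ) + 1) * m : ℤ) : ℝ) := by
        push_cast
        simp_rw [mul_assoc]
        rw [← Finset.mul_sum, hm]
      rw [hsum, round_intCast, sub_self, abs_zero]
      positivity
  -- otherwise every nonzero vector gives a strictly positive distance
  push_neg at hint
  by_contra hninf
  have hfin : S.Finite := Set.not_infinite.mp hninf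
  have hpos : ∀ u ∈ S, 0 < |(∑ i, (u i : ℝ) * α i) - round (∑ i, (u i : ℝ) * α i)| := by
    rintro u ⟨hu0, -⟩
    rcases (abs_nonneg ((∑ i, (u i : ℝ) * α i) - round (∑ i, (u i : ℝ) * α i))).lt_or_eq with h | h
    · exact h
    · exfalso
      exact hint u hu0 (round (∑ i, (u i : ℝ) * α i))
        (by have := (abs_eq_zero.mp h.symm); linarith [sub_eq_zero.mp this])
  -- a uniform positive lower bound on these distances
  obtain ⟨ε, hε, hεle⟩ : ∃ ε > 0, ∀ u ∈ S,
      ε ≤ |(∑ i, (u i : ℝ) * α i) - round (∑ i, (u i : ℝ) * α i)| := by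
    rcases hfin.toFinset.eq_empty_or_nonempty with he | hne
    · exact ⟨1, one_pos, fun u hu => absurd (hfin.mem_toFinset.mpr hu)
        (by simp [he])⟩
    · refine ⟨hfin.toFinset.inf' hne
        (fun u => |(∑ i, (u i : ℝ) * α i) - round (∑ i, (u i : ℝ) * α i)|), ?_, ?_⟩
      · exact (Finset.lt_inf'_iff _).mpr fun u hu => hpos u (hfin.mem_toFinset.mp hu)
      · exact fun u hu => Finset.inf'_le _ (hfin.mem_toFinset.mpr hu)
  -- choose a very large q from the hypothesis set
  set e : ℝ := η / k - η'' with he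
  have he0 : 0 < e := by rw [he]; linarith
  set C : ℝ := 2 * k * (2 : ℝ) ^ ((k : ℝ) * (1 + η'')) with hC
  have hev : ∀ᶠ q : ℕ in atTop,
      C ≤ (q : ℝ) ^ e ∧ 2 * k * (q : ℝ) ^ (-(1 + η / k)) < ε := by
    have t1 : Tendsto (fun q : ℕ => (q : ℝ) ^ e) atTop atTop :=
      (tendsto_rpow_atTop he0).comp tendsto_natCast_atTop_atTop
    have t2 : Tendsto (fun q : ℕ => 2 * k * (q : ℝ) ^ (-(1 + η / k))) atTop (nhds 0) := by
      have := (tendsto_rpow_neg_atTop (show (0:ℝ) < 1 + η / k by positivity)).comp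
        tendsto_natCast_atTop_atTop
      simpa using this.const_mul (2 * (k : ℝ))
    filter_upwards [t1.eventually_ge_atTop C,
      t2.eventually (eventually_lt_nhds hε)] with q h1 h2
    exact ⟨h1, by simpa using h2⟩
  obtain ⟨Q₀, hQ₀⟩ := eventually_atTop.mp hev
  obtain ⟨q, hqmem, hqQ⟩ := hinf.exists_gt Q₀
  obtain ⟨hq, hap⟩ := hqmem
  obtain ⟨hq1, hq2⟩ := hQ₀ q hqQ.le
  have hqR : (0 : ℝ) < (q : ℝ) := by exact_mod_cast hq
  have hqR1 : (1 : ℝ) ≤ (q : ℝ) := by exact_mod_cast hq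
  -- apply the core construction
  have hap' : ∀ i, |(q : ℝ) * α i - round ((q : ℝ) * α i)| ≤ (q : ℝ) ^ (-((1 + η) / k)) := by
    intro i
    rw [← neg_div]
    exact hap i
  obtain ⟨w, hw0, hwle, hwb⟩ := kt_core k hk α ((1 + η) / k) q hq hap'
  set U : ℕ := ⌈(q : ℝ) ^ ((k : ℝ)⁻¹)⌉₊ with hU
  set M : ℕ := Finset.univ.sup fun i => (w i).natAbs with hMdef
  have hMU : (M : ℝ) ≤ (U : ℝ) := by
    have : M ≤ U := by
      apply Finset.sup_le
      intro i _
      have h' : ((w i).natAbs : ℝ) ≤ (U : ℝ) := by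
        rw [Nat.cast_natAbs]
        push_cast
        exact hwle i
      exact_mod_cast h'
    exact_mod_cast this
  have hq1k : (1 : ℝ) ≤ (q : ℝ) ^ ((k : ℝ)⁻¹) :=
    Real.one_le_rpow hqR1 (by positivity)
  have hU2 : (U : ℝ) ≤ 2 * (q : ℝ) ^ ((k : ℝ)⁻¹) := by
    have := Nat.ceil_lt_add_one (R := ℝ) (Real.rpow_nonneg hqR.le ((k : ℝ)⁻¹))
    rw [hU]; linarith
  have hM1' : (1 : ℝ) ≤ (M : ℝ) := hM1 w hw0
  -- the numeric chain
  have hmain : (k : ℝ) * (U : ℝ) * (q : ℝ) ^ (-((1 + η) / k)) / q ≤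
      2 * k * (q : ℝ) ^ (-(1 + η / k)) := by
    rw [div_le_iff₀ hqR]
    have hexp2 : (q : ℝ) ^ (-(1 + η / k)) * (q : ℝ) =
        (q : ℝ) ^ ((k : ℝ)⁻¹) * (q : ℝ) ^ (-((1 + η) / k)) := by
      rw [← Real.rpow_add_one hqR.ne', ← Real.rpow_add hqR]
      congr 1
      field_simp
      ring
    have hX : (0 : ℝ) ≤ (q : ℝ) ^ (-((1 + η) / k)) := Real.rpow_nonneg hqR.le _
    calc (k : ℝ) * (U : ℝ) * (q : ℝ) ^ (-((1 + η) / k))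
        ≤ (k : ℝ) * (2 * (q : ℝ) ^ ((k : ℝ)⁻¹)) * (q : ℝ) ^ (-((1 + η) / k)) := by
          nlinarith [mul_le_mul_of_nonneg_left hU2 (mul_nonneg hkR0.le hX)]
      _ = 2 * (k : ℝ) * ((q : ℝ) ^ (-(1 + η / k)) * (q : ℝ)) := by rw [hexp2]; ring
      _ = 2 * (k : ℝ) * (q : ℝ) ^ (-(1 + η / k)) * (q : ℝ) := by ring
  have hexp : (q : ℝ) ^ (-(1 + η / k)) =
      (q : ℝ) ^ (-(1 + η'')) * (q : ℝ) ^ (-e) := by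
    rw [← Real.rpow_add hqR]
    congr 1
    rw [he]; ring
  have hfinal : 2 * k * (q : ℝ) ^ (-(1 + η / k)) ≤ (M : ℝ) ^ (-(k : ℝ) * (1 + η'')) := by
    have hz : -(k : ℝ) * (1 + η'') ≤ 0 := by nlinarith
    have h1 : ((2 : ℝ) * (q : ℝ) ^ ((k : ℝ)⁻¹)) ^ (-(k : ℝ) * (1 + η'')) ≤
        (M : ℝ) ^ (-(k : ℝ) * (1 + η'')) :=
      Real.rpow_le_rpow_of_nonpos (by linarith) (hMU.trans hU2) hz
    have h2 : ((2 : ℝ) * (q : ℝ) ^ ((k : ℝ)⁻¹)) ^ (-(k : ℝ) * (1 + η'')) =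
        (2 : ℝ) ^ (-(k : ℝ) * (1 + η'')) * (q : ℝ) ^ (-(1 + η'')) := by
      rw [Real.mul_rpow (by norm_num) (Real.rpow_nonneg hqR.le _),
        ← Real.rpow_mul hqR.le]
      congr 2
      field_simp
    have h3 : 2 * (k : ℝ) * (q : ℝ) ^ (-e) ≤ (2 : ℝ) ^ (-(k : ℝ) * (1 + η'')) := by
      rw [Real.rpow_neg hqR.le,
        show -(k : ℝ) * (1 + η'') = -((k : ℝ) * (1 + η'')) from by ring,
        Real.rpow_neg (by norm_num : (0:ℝ) ≤ 2)]
      have hb : (0 : ℝ) < (q : ℝ) ^ e := Real.rpow_pos_of_pos hqR _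
      have hc : (0 : ℝ) < (2 : ℝ) ^ ((k : ℝ) * (1 + η'')) := Real.rpow_pos_of_pos two_pos _
      rw [mul_comm (2 * (k : ℝ)), ← div_eq_inv_mul, ← one_div, div_le_div_iff₀ hb hc]
      rw [hC] at hq1
      nlinarith [hq1]
    calc 2 * (k : ℝ) * (q : ℝ) ^ (-(1 + η / k))
        = (2 * (k : ℝ) * (q : ℝ) ^ (-e)) * (q : ℝ) ^ (-(1 + η'')) := by
          rw [hexp]; ring
      _ ≤ (2 : ℝ) ^ (-(k : ℝ) * (1 + η'')) * (q : ℝ) ^ (-(1 + η'')) := by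
          exact mul_le_mul_of_nonneg_right h3 (Real.rpow_nonneg hqR.le _)
      _ = ((2 : ℝ) * (q : ℝ) ^ ((k : ℝ)⁻¹)) ^ (-(k : ℝ) * (1 + η'')) := h2.symm
      _ ≤ (M : ℝ) ^ (-(k : ℝ) * (1 + η'')) := h1
  have hwS : w ∈ S := ⟨hw0, (hwb.trans hmain).trans hfinal⟩
  have hcontr : ε ≤ |(∑ i, (w i : ℝ) * α i) - round (∑ i, (w i : ℝ) * α i)| := hεle w hwS
  have : |(∑ i, (w i : ℝ) * α i) - round (∑ i, (w i : ℝ) * α i)| < ε :=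
    lt_of_le_of_lt (hwb.trans hmain) hq2
  linarith
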